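/- For every positive integer t, the number of balanced companion families on {1,…,4(t+1)}, counted as unordered sets of unordered companion pairs of 2-element sets, is at least (2(t+1))! / ((t+1)! · 2^{t+1}). -/

import Mathlib

/-- A balanced companion family on `{1,…,4(t+1)}`, represented as an unordered set of
unordered companion pairs: `F` consists of `t+1` pairs, each pair consists of two
2-element subsets of `{1,…,4(t+1)}` with equal element sums, all the 2-element sets
involved are pairwise disjoint, and their union is all of `{1,…,4(t+1)}`. -/
def IsBalancedCompanionFamilySet (t : ℕ) (F : Finset (Finset (Finset ℕ))) : Prop :=
  F.card = t + 1 ∧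
  (∀ P ∈ F, P.card = 2) ∧
  (∀ P ∈ F, ∀ A ∈ P, A ⊆ Finset.Icc 1 (4*(t+1)) ∧ A.card = 2) ∧
  (∀ P ∈ F, ∀ P' ∈ F, ∀ A ∈ P, ∀ A' ∈ P', A ≠ A' → Disjoint A A') ∧
  (F.biUnion fun P => P.biUnion id) = Finset.Icc 1 (4*(t+1)) ∧
  (∀ P ∈ F, ∀ A ∈ P, ∀ A' ∈ P, A.sum id = A'.sum id)

namespace BCF

/-- The complementary pair `{k+1, 4n-k}` (sum `4n+1`) associated to `k : Fin (2n)`. -/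
def q (n : ℕ) (k : Fin (2*n)) : Finset ℕ := {k.val + 1, 4*n - k.val}

lemma q_card (n : ℕ) (k : Fin (2*n)) : (q n k).card = 2 := by
  have := k.isLt
  rw [q, Finset.card_pair (by omega)]

lemma q_subset (n : ℕ) (k : Fin (2*n)) : q n k ⊆ Finset.Icc 1 (4*n) := by
  have := k.isLt
  intro x hx
  simp only [q, Finset.mem_insert, Finset.mem_singleton] at hx
  rw [Finset.mem_Icc]
  omega

lemma q_sum (n : ℕ) (k : Fin (2*n)) : (q n k).sum id = 4*n + 1 := by
  have := k.isLt
  rw [q, Finset.sum_pair (by omega)]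
  simp only [id]
  omega

lemma q_mem1 (n : ℕ) (k : Fin (2*n)) : k.val + 1 ∈ q n k := by
  simp [q]

lemma q_mem2 (n : ℕ) (k : Fin (2*n)) : 4*n - k.val ∈ q n k := by
  simp [q]

lemma q_inj (n : ℕ) : Function.Injective (q n) := by
  intro k k' h
  have hk := k.isLt; have hk' := k'.isLt
  have h1 : k.val + 1 ∈ q n k' := by rw [← h]; simp [q]
  simp only [q, Finset.mem_insert, Finset.mem_singleton] at h1
  exact Fin.ext (by omega)

lemma q_disjoint (n : ℕ) {k k' : Fin (2*n)} (h : k ≠ k') : Disjoint (q n k) (q n k') := by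
  have hk := k.isLt; have hk' := k'.isLt
  have hne : k.val ≠ k'.val := fun e => h (Fin.ext e)
  rw [Finset.disjoint_left]
  intro x hx hx'
  simp only [q, Finset.mem_insert, Finset.mem_singleton] at hx hx'
  omega

def idx0 {n : ℕ} (i : Fin n) : Fin (2*n) := ⟨2*i.val, by have := i.isLt; omega⟩
def idx1 {n : ℕ} (i : Fin n) : Fin (2*n) := ⟨2*i.val+1, by have := i.isLt; omega⟩

/-- The `i`-th companion pair produced by the permutation `σ`. -/
def pairAt (n : ℕ) (σ : Equiv.Perm (Fin (2*n))) (i : Fin n) : Finset (Finset ℕ) :=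
  {q n (σ (idx0 i)), q n (σ (idx1 i))}

/-- The balanced companion family produced by the permutation `σ`. -/
def fam (n : ℕ) (σ : Equiv.Perm (Fin (2*n))) : Finset (Finset (Finset ℕ)) :=
  Finset.univ.image (pairAt n σ)

lemma sigma_idx_ne (n : ℕ) (σ : Equiv.Perm (Fin (2*n))) (i : Fin n) :
    σ (idx0 i) ≠ σ (idx1 i) := by
  intro e
  have h : (idx0 i).val = (idx1 i).val := congrArg Fin.val (σ.injective e)
  simp only [idx0, idx1] at h
  omega

lemma pair_eq {n : ℕ} {a b c d : Fin (2*n)} (hab : a ≠ b)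
    (h : ({q n a, q n b} : Finset (Finset ℕ)) = {q n c, q n d}) :
    (a = c ∧ b = d) ∨ (a = d ∧ b = c) := by
  have h1 : q n a ∈ ({q n c, q n d} : Finset (Finset ℕ)) := by rw [← h]; simp
  have h2 : q n b ∈ ({q n c, q n d} : Finset (Finset ℕ)) := by rw [← h]; simp
  simp only [Finset.mem_insert, Finset.mem_singleton] at h1 h2
  rcases h1 with h1 | h1 <;> rcases h2 with h2 | h2
  · exact absurd ((q_inj n h1).trans (q_inj n h2).symm) hab
  · exact Or.inl ⟨q_inj n h1, q_inj n h2⟩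
  · exact Or.inr ⟨q_inj n h1, q_inj n h2⟩
  · exact absurd ((q_inj n h1).trans (q_inj n h2).symm) hab

lemma pairAt_injective (n : ℕ) (σ : Equiv.Perm (Fin (2*n))) :
    Function.Injective (pairAt n σ) := by
  intro i j h
  rcases pair_eq (sigma_idx_ne n σ i) h with ⟨h1, -⟩ | ⟨h1, -⟩
  · have h2 : (idx0 i).val = (idx0 j).val := congrArg Fin.val (σ.injective h1)
    simp only [idx0] at h2
    exact Fin.ext (by omega)
  · have h2 : (idx0 i).val = (idx1 j).val := congrArg Fin.val (σ.injective h1)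
    simp only [idx0, idx1] at h2
    exact absurd h2 (by omega)

lemma fam_card (n : ℕ) (σ : Equiv.Perm (Fin (2*n))) : (fam n σ).card = n := by
  rw [fam, Finset.card_image_of_injective _ (pairAt_injective n σ), Finset.card_univ,
    Fintype.card_fin]

lemma mem_fam {n : ℕ} {σ : Equiv.Perm (Fin (2*n))} {P : Finset (Finset ℕ)}
    (hP : P ∈ fam n σ) : ∃ i : Fin n, P = pairAt n σ i := by
  obtain ⟨i, -, rfl⟩ := Finset.mem_image.mp hP
  exact ⟨i, rfl⟩

lemma mem_pairAt {n : ℕ} {σ : Equiv.Perm (Fin (2*n))} {i : Fin n} {A : Finset ℕ}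
    (hA : A ∈ pairAt n σ i) : ∃ k : Fin (2*n), A = q n k := by
  simp only [pairAt, Finset.mem_insert, Finset.mem_singleton] at hA
  rcases hA with h | h
  · exact ⟨_, h⟩
  · exact ⟨_, h⟩

lemma cover (n : ℕ) (σ : Equiv.Perm (Fin (2*n))) (k : Fin (2*n)) :
    ∃ P ∈ fam n σ, q n k ∈ P := by
  have hl := (σ⁻¹ k).isLt
  refine ⟨pairAt n σ ⟨(σ⁻¹ k).val / 2, by omega⟩,
    Finset.mem_image_of_mem _ (Finset.mem_univ _), ?_⟩
  have hk : σ (σ⁻¹ k) = k := Equiv.apply_symm_apply σ k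
  by_cases hpar : (σ⁻¹ k).val % 2 = 0
  · have h0 : idx0 (⟨(σ⁻¹ k).val / 2, by omega⟩ : Fin n) = σ⁻¹ k := by
      apply Fin.ext; simp only [idx0]; omega
    rw [pairAt, h0, hk]
    simp
  · have h0 : idx1 (⟨(σ⁻¹ k).val / 2, by omega⟩ : Fin n) = σ⁻¹ k := by
      apply Fin.ext; simp only [idx1]; omega
    rw [pairAt, h0, hk]
    simp

lemma fam_isBCF (t : ℕ) (σ : Equiv.Perm (Fin (2*(t+1)))) :
    IsBalancedCompanionFamilySet t (fam (t+1) σ) := by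
  refine ⟨fam_card (t+1) σ, ?_, ?_, ?_, ?_, ?_⟩
  · intro P hP
    obtain ⟨i, rfl⟩ := mem_fam hP
    rw [pairAt, Finset.card_pair (fun e => sigma_idx_ne (t+1) σ i (q_inj (t+1) e))]
  · intro P hP A hA
    obtain ⟨i, rfl⟩ := mem_fam hP
    obtain ⟨k, rfl⟩ := mem_pairAt hA
    exact ⟨q_subset (t+1) k, q_card (t+1) k⟩
  · intro P hP P' hP' A hA A' hA' hne
    obtain ⟨i, rfl⟩ := mem_fam hP
    obtain ⟨i', rfl⟩ := mem_fam hP'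
    obtain ⟨k, rfl⟩ := mem_pairAt hA
    obtain ⟨k', rfl⟩ := mem_pairAt hA'
    exact q_disjoint (t+1) (fun e => hne (congrArg _ e))
  · ext m
    simp only [Finset.mem_biUnion, id]
    constructor
    · rintro ⟨P, hP, A, hA, hm⟩
      obtain ⟨i, rfl⟩ := mem_fam hP
      obtain ⟨k, rfl⟩ := mem_pairAt hA
      exact q_subset (t+1) k hm
    · intro hm
      rw [Finset.mem_Icc] at hm
      by_cases h2 : m ≤ 2*(t+1)
      · obtain ⟨P, hP, hq⟩ := cover (t+1) σ ⟨m-1, by omega⟩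
        refine ⟨P, hP, q (t+1) ⟨m-1, by omega⟩, hq, ?_⟩
        have := q_mem1 (t+1) (⟨m-1, by omega⟩ : Fin (2*(t+1)))
        simpa only [show m - 1 + 1 = m by omega] using this
      · obtain ⟨P, hP, hq⟩ := cover (t+1) σ ⟨4*(t+1)-m, by omega⟩
        refine ⟨P, hP, q (t+1) ⟨4*(t+1)-m, by omega⟩, hq, ?_⟩
        have := q_mem2 (t+1) (⟨4*(t+1)-m, by omega⟩ : Fin (2*(t+1)))
        simpa only [show 4*(t+1) - (4*(t+1)-m) = m by omega] using this
  · intro P hP A hA A' hA'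
    obtain ⟨i, rfl⟩ := mem_fam hP
    obtain ⟨k, rfl⟩ := mem_pairAt hA
    obtain ⟨k', rfl⟩ := mem_pairAt hA'
    rw [q_sum, q_sum]

/-- The index of the companion pair of `τ` containing the set matched with `σ (idx0 i)`. -/
def pidx (n : ℕ) (τ σ : Equiv.Perm (Fin (2*n))) (i : Fin n) : Fin n :=
  ⟨(τ⁻¹ (σ (idx0 i))).val / 2, by have := (τ⁻¹ (σ (idx0 i))).isLt; omega⟩

lemma key (n : ℕ) (τ σ : Equiv.Perm (Fin (2*n))) (h : fam n σ = fam n τ) (i : Fin n) :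
    (σ (idx0 i) = τ (idx0 (pidx n τ σ i)) ∧ σ (idx1 i) = τ (idx1 (pidx n τ σ i))) ∨
    (σ (idx0 i) = τ (idx1 (pidx n τ σ i)) ∧ σ (idx1 i) = τ (idx0 (pidx n τ σ i))) := by
  have hmem : pairAt n σ i ∈ fam n τ := h ▸ Finset.mem_image_of_mem _ (Finset.mem_univ i)
  obtain ⟨j, -, hj⟩ := Finset.mem_image.mp hmem
  have hd := pair_eq (sigma_idx_ne n σ i) (hj.symm : pairAt n σ i = pairAt n τ j)
  rcases hd with ⟨h1, h2⟩ | ⟨h1, h2⟩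
  · have hinv : τ⁻¹ (σ (idx0 i)) = idx0 j := by rw [h1]; exact Equiv.symm_apply_apply τ _
    have hpj : pidx n τ σ i = j := by
      apply Fin.ext
      show (τ⁻¹ (σ (idx0 i))).val / 2 = j.val
      rw [hinv]
      show 2*j.val/2 = j.val
      omega
    rw [hpj]
    exact Or.inl ⟨h1, h2⟩
  · have hinv : τ⁻¹ (σ (idx0 i)) = idx1 j := by rw [h1]; exact Equiv.symm_apply_apply τ _
    have hpj : pidx n τ σ i = j := by
      apply Fin.ext
      show (τ⁻¹ (σ (idx0 i))).val / 2 = j.val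
      rw [hinv]
      show (2*j.val+1)/2 = j.val
      omega
    rw [hpj]
    exact Or.inr ⟨h1, h2⟩

lemma pidx_inj (n : ℕ) (τ σ : Equiv.Perm (Fin (2*n))) (h : fam n σ = fam n τ) :
    Function.Injective (pidx n τ σ) := by
  intro i i' he
  by_contra hne
  have step : ∀ (a b : Fin (2*n)), σ a = σ b → a.val = b.val :=
    fun a b e => congrArg Fin.val (σ.injective e)
  rcases key n τ σ h i with ⟨h1, h2⟩ | ⟨h1, h2⟩ <;>
      rcases key n τ σ h i' with ⟨h1', h2'⟩ | ⟨h1', h2'⟩ <;>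
      rw [← he] at h1' h2'
  · have := step _ _ (h1.trans h1'.symm)
    simp only [idx0] at this
    exact hne (Fin.ext (by omega))
  · have := step _ _ (h1.trans h2'.symm)
    simp only [idx0, idx1] at this
    omega
  · have := step _ _ (h2.trans h1'.symm)
    simp only [idx0, idx1] at this
    omega
  · have := step _ _ (h1.trans h1'.symm)
    simp only [idx0, idx1] at this
    exact hne (Fin.ext (by omega))

lemma sigma_eq (n : ℕ) (τ σ σ' : Equiv.Perm (Fin (2*n)))
    (h : fam n σ = fam n τ) (h' : fam n σ' = fam n τ)
    (hp : ∀ i, pidx n τ σ i = pidx n τ σ' i)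
    (hb : ∀ i, (τ⁻¹ (σ (idx0 i))).val % 2 = (τ⁻¹ (σ' (idx0 i))).val % 2) :
    σ = σ' := by
  have main : ∀ i : Fin n, σ (idx0 i) = σ' (idx0 i) ∧ σ (idx1 i) = σ' (idx1 i) := by
    intro i
    rcases key n τ σ h i with ⟨h1, h2⟩ | ⟨h1, h2⟩ <;>
        rcases key n τ σ' h' i with ⟨h1', h2'⟩ | ⟨h1', h2'⟩ <;>
        rw [← hp i] at h1' h2'
    · exact ⟨h1.trans h1'.symm, h2.trans h2'.symm⟩
    · exfalso
      have e1 : τ⁻¹ (σ (idx0 i)) = idx0 (pidx n τ σ i) := by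
        rw [h1]; exact Equiv.symm_apply_apply τ _
      have e2 : τ⁻¹ (σ' (idx0 i)) = idx1 (pidx n τ σ i) := by
        rw [h1']; exact Equiv.symm_apply_apply τ _
      have := hb i
      rw [e1, e2] at this
      simp only [idx0, idx1] at this
      omega
    · exfalso
      have e1 : τ⁻¹ (σ (idx0 i)) = idx1 (pidx n τ σ i) := by
        rw [h1]; exact Equiv.symm_apply_apply τ _
      have e2 : τ⁻¹ (σ' (idx0 i)) = idx0 (pidx n τ σ i) := by
        rw [h1']; exact Equiv.symm_apply_apply τ _
      have := hb i
      rw [e1, e2] at this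
      simp only [idx0, idx1] at this
      omega
    · exact ⟨h1.trans h1'.symm, h2.trans h2'.symm⟩
  apply Equiv.ext
  intro k
  have hl := k.isLt
  by_cases hpar : k.val % 2 = 0
  · have h0 : k = idx0 (⟨k.val / 2, by omega⟩ : Fin n) := by
      apply Fin.ext; simp only [idx0]; omega
    rw [h0]; exact (main _).1
  · have h0 : k = idx1 (⟨k.val / 2, by omega⟩ : Fin n) := by
      apply Fin.ext; simp only [idx1]; omega
    rw [h0]; exact (main _).2

lemma fiber_bound (n : ℕ) (τ : Equiv.Perm (Fin (2*n))) :
    (Finset.univ.filter fun σ : Equiv.Perm (Fin (2*n)) => fam n σ = fam n τ).card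
      ≤ n.factorial * 2 ^ n := by
  classical
  have hcard : (Finset.univ : Finset (Equiv.Perm (Fin n) × (Fin n → Bool))).card
      = n.factorial * 2 ^ n := by
    simp [Finset.card_univ, Fintype.card_perm, Fintype.card_fun]
  rw [← hcard]
  apply Finset.card_le_card_of_injOn (f := fun σ =>
      (if hσ : Function.Injective (pidx n τ σ) then
        Equiv.ofBijective _ (Finite.injective_iff_bijective.mp hσ) else 1,
       fun i => decide ((τ⁻¹ (σ (idx0 i))).val % 2 = 1)))
  · intro _ _; exact Finset.mem_univ _
  · intro σ hσ σ' hσ' he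
    simp only [Finset.coe_filter, Set.mem_setOf_eq, Finset.mem_univ, true_and] at hσ hσ'
    have hi := pidx_inj n τ σ hσ
    have hi' := pidx_inj n τ σ' hσ'
    simp only at he
    rw [dif_pos hi, dif_pos hi'] at he
    have hfst := congrArg Prod.fst he
    have hsnd := congrArg Prod.snd he
    simp only at hfst hsnd
    have hp : ∀ i, pidx n τ σ i = pidx n τ σ' i := by
      intro i
      exact congrFun (congrArg (fun (e : Equiv.Perm (Fin n)) => (e : Fin n → Fin n)) hfst) i
    have hb : ∀ i, (τ⁻¹ (σ (idx0 i))).val % 2 = (τ⁻¹ (σ' (idx0 i))).val % 2 := by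
      intro i
      have := congrFun hsnd i
      have h2 := (τ⁻¹ (σ (idx0 i))).isLt
      rcases decide_eq_decide.mp this with h
      omega
    exact sigma_eq n τ σ σ' hσ hσ' hp hb

end BCF

/-- The number of balanced companion families on `{1,…,4(t+1)}`, counted as unordered
sets of unordered companion pairs, is at least `(2(t+1))! / ((t+1)! · 2^(t+1))`. -/
theorem count_balanced_companion_families_lower_bound (t : ℕ) (ht : 0 < t) :
    (2*(t+1)).factorial / ((t+1).factorial * 2 ^ (t+1)) ≤
      {F : Finset (Finset (Finset ℕ)) | IsBalancedCompanionFamilySet t F}.ncard := by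
  classical
  open BCF in
  set S := {F : Finset (Finset (Finset ℕ)) | IsBalancedCompanionFamilySet t F} with hS
  have hsub : ↑(Finset.univ.image (fam (t+1))) ⊆ S := by
    intro F hF
    simp only [Finset.coe_image, Set.mem_image, Finset.mem_coe, Finset.mem_univ] at hF
    obtain ⟨σ, -, rfl⟩ := hF
    exact fam_isBCF t σ
  have hfin : S.Finite := by
    apply Set.Finite.subset
      (Finset.finite_toSet (((Finset.Icc 1 (4*(t+1))).powerset.powerset).powerset))
    intro F hF
    have hF' : IsBalancedCompanionFamilySet t F := hF
    obtain ⟨-, -, h3, -, -, -⟩ := hF'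
    refine Finset.mem_coe.mpr (Finset.mem_powerset.mpr (Finset.subset_iff.mpr fun {P} hP =>
      Finset.mem_powerset.mpr (Finset.subset_iff.mpr fun {A} hA =>
        Finset.mem_powerset.mpr (h3 P hP A hA).1)))
  have h2 : (Finset.univ.image (fam (t+1))).card ≤ S.ncard := by
    rw [← Set.ncard_coe_finset]
    exact Set.ncard_le_ncard hsub hfin
  have h1 : (2*(t+1)).factorial
      ≤ ((t+1).factorial * 2^(t+1)) * (Finset.univ.image (fam (t+1))).card := by
    have hh := Finset.card_le_mul_card_image (f := fam (t+1)) Finset.univ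
      ((t+1).factorial * 2 ^ (t+1)) ?_
    · simpa [Finset.card_univ, Fintype.card_perm] using hh
    · intro F hF
      obtain ⟨τ, -, rfl⟩ := Finset.mem_image.mp hF
      exact fiber_bound (t+1) τ
  calc (2*(t+1)).factorial / ((t+1).factorial * 2^(t+1))
      ≤ (((t+1).factorial * 2^(t+1)) * (Finset.univ.image (fam (t+1))).card)
          / ((t+1).factorial * 2^(t+1)) := Nat.div_le_div_right h1
    _ = (Finset.univ.image (fam (t+1))).card :=
        Nat.mul_div_cancel_left _ (by positivity)
    _ ≤ S.ncard := h2
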